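/- Let σ be an involutive automorphism of ℍ, extended entrywise to matrices (X̂ denotes entrywise application of σ). The quaternion matrix equation X - A·X̂·B = C has a solution if and only if there exist nonsingular quaternion matrices S and R such that [[A, C], [0, I]]·R = Ŝ·[[A, 0], [0, I]] and [[I, 0], [0, B]]·R = S·[[I, 0], [0, B]]. -/

import Mathlib

open Matrix Quaternion

section Wim
variable {m n : ℕ} (σ : ℍ[ℝ] ≃+* ℍ[ℝ]) (hinv : ∀ h : ℍ[ℝ], σ (σ h) = h)

private lemma quat_central {x : ℍ[ℝ]} (h : ∀ y, x * y = y * x) : x = (x.re : ℍ[ℝ]) := by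
  obtain ⟨i, hi1, hi2, hi3, hi4⟩ : ∃ i : ℍ[ℝ], i.re = 0 ∧ i.imI = 1 ∧ i.imJ = 0 ∧ i.imK = 0 :=
    ⟨⟨0,1,0,0⟩, rfl, rfl, rfl, rfl⟩
  obtain ⟨j, hj1, hj2, hj3, hj4⟩ : ∃ j : ℍ[ℝ], j.re = 0 ∧ j.imI = 0 ∧ j.imJ = 1 ∧ j.imK = 0 :=
    ⟨⟨0,0,1,0⟩, rfl, rfl, rfl, rfl⟩
  have h1 := h i
  have h2 := h j
  rw [Quaternion.ext_iff] at h1 h2 ⊢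
  simp [Quaternion.re_mul, Quaternion.imI_mul, Quaternion.imJ_mul,
    Quaternion.imK_mul, hi1, hi2, hi3, hi4, hj1, hj2, hj3, hj4] at h1 h2 ⊢
  refine ⟨?_, ?_, ?_⟩ <;> linarith [h1.1, h1.2, h2.1, h2.2]

include hinv in
private lemma sigma_coe (r : ℝ) : σ (r : ℍ[ℝ]) = (r : ℍ[ℝ]) := by
  have hc : ∀ s : ℝ, σ (s : ℍ[ℝ]) = ((σ (s:ℍ[ℝ])).re : ℍ[ℝ]) := by
    intro s
    refine quat_central fun y => ?_
    conv_lhs => rw [← hinv y]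
    rw [← _root_.map_mul, Quaternion.coe_commutes, _root_.map_mul, hinv]
  let f : ℝ →+* ℝ :=
    { toFun := fun s => (σ (s:ℍ[ℝ])).re
      map_one' := by simp
      map_zero' := by simp
      map_add' := fun a b => by push_cast; rw [map_add]; simp
      map_mul' := fun a b => by
        have := congrArg QuaternionAlgebra.re (congrArg σ (Quaternion.coe_mul a b))
        rw [_root_.map_mul, hc a, hc b, ← Quaternion.coe_mul] at this
        simpa using this }
  have hf : f = RingHom.id ℝ := Subsingleton.elim _ _
  have : (σ (r:ℍ[ℝ])).re = r := congrArg (fun g : ℝ →+* ℝ => g r) hf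
  rw [hc r, this]

include hinv in
private lemma sigma_smul (r : ℝ) (x : ℍ[ℝ]) : σ (r • x) = r • σ x := by
  rw [← Quaternion.coe_mul_eq_smul, _root_.map_mul, sigma_coe σ hinv,
    Quaternion.coe_mul_eq_smul]

/-- σ as a real-linear map -/
private noncomputable def σL : ℍ[ℝ] →ₗ[ℝ] ℍ[ℝ] :=
  { toFun := σ, map_add' := map_add σ, map_smul' := sigma_smul σ hinv }

private lemma mmap_mul {a b c : Type*} [Fintype b] (M : Matrix a b ℍ[ℝ]) (N : Matrix b c ℍ[ℝ]) :
    (M * N).map σ = M.map σ * N.map σ :=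
  Matrix.map_mul (f := σ.toRingHom)

private lemma mmap_one {a : Type*} [DecidableEq a] :
    (1 : Matrix a a ℍ[ℝ]).map σ = 1 :=
  Matrix.map_one _ (map_zero σ) (map_one σ)

private lemma mmap_zero {a b : Type*} : (0 : Matrix a b ℍ[ℝ]).map σ = 0 :=
  Matrix.map_zero _ (map_zero σ)

include hinv in
private lemma mmap_invol {a b : Type*} (M : Matrix a b ℍ[ℝ]) : (M.map σ).map σ = M := by
  rw [Matrix.map_map]
  have : (⇑σ ∘ ⇑σ) = id := funext hinv
  rw [this, Matrix.map_id]

variable (A : Matrix (Fin m) (Fin m) ℍ[ℝ]) (B : Matrix (Fin n) (Fin n) ℍ[ℝ])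
  (C : Matrix (Fin m) (Fin n) ℍ[ℝ])

private lemma eq1_iff (S R : Matrix (Fin m ⊕ Fin n) (Fin m ⊕ Fin n) ℍ[ℝ]) :
    fromBlocks A C 0 1 * R = S.map σ * fromBlocks A 0 0 1 ↔
      (A * R.toBlocks₁₁ + C * R.toBlocks₂₁ = (S.toBlocks₁₁).map σ * A ∧
       A * R.toBlocks₁₂ + C * R.toBlocks₂₂ = (S.toBlocks₁₂).map σ ∧
       R.toBlocks₂₁ = (S.toBlocks₂₁).map σ * A ∧
       R.toBlocks₂₂ = (S.toBlocks₂₂).map σ) := by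
  conv_lhs => rw [← fromBlocks_toBlocks R, ← fromBlocks_toBlocks S]
  rw [fromBlocks_map, fromBlocks_multiply, fromBlocks_multiply]
  simp only [Matrix.zero_mul, Matrix.mul_zero, Matrix.one_mul, Matrix.mul_one,
    add_zero, zero_add]
  exact fromBlocks_inj

private lemma eq2_iff (S R : Matrix (Fin m ⊕ Fin n) (Fin m ⊕ Fin n) ℍ[ℝ]) :
    fromBlocks 1 0 0 B * R = S * fromBlocks 1 0 0 B ↔
      (R.toBlocks₁₁ = S.toBlocks₁₁ ∧
       R.toBlocks₁₂ = S.toBlocks₁₂ * B ∧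
       B * R.toBlocks₂₁ = S.toBlocks₂₁ ∧
       B * R.toBlocks₂₂ = S.toBlocks₂₂ * B) := by
  conv_lhs => rw [← fromBlocks_toBlocks R, ← fromBlocks_toBlocks S]
  rw [fromBlocks_multiply, fromBlocks_multiply]
  simp only [Matrix.zero_mul, Matrix.mul_zero, Matrix.one_mul, Matrix.mul_one,
    add_zero, zero_add]
  exact fromBlocks_inj

local notation "EE" => Matrix (Fin m ⊕ Fin n) (Fin m ⊕ Fin n) ℍ[ℝ]

private noncomputable def Fmap : (EE × EE) →ₗ[ℝ] (EE × EE) :=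
  LinearMap.prod
    ((LinearMap.mulLeft ℝ (fromBlocks A C 0 1)).comp (LinearMap.snd ℝ EE EE) -
     (LinearMap.mulRight ℝ (fromBlocks A 0 0 1)).comp
       ((σL σ hinv).mapMatrix.comp (LinearMap.fst ℝ EE EE)))
    ((LinearMap.mulLeft ℝ (fromBlocks 1 0 0 B)).comp (LinearMap.snd ℝ EE EE) -
     (LinearMap.mulRight ℝ (fromBlocks 1 0 0 B)).comp (LinearMap.fst ℝ EE EE))

private lemma mem_T_iff (p : EE × EE) :
    p ∈ LinearMap.ker (Fmap σ hinv A B C) ↔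
      (fromBlocks A C 0 1 * p.2 = p.1.map σ * fromBlocks A 0 0 1 ∧
       fromBlocks 1 0 0 B * p.2 = p.1 * fromBlocks 1 0 0 B) := by
  simp only [Fmap, LinearMap.mem_ker, LinearMap.prod_apply, Function.prod, Prod.mk_eq_zero,
    LinearMap.sub_apply, LinearMap.comp_apply, LinearMap.mulLeft_apply,
    LinearMap.mulRight_apply, LinearMap.snd_apply, LinearMap.fst_apply,
    LinearMap.mapMatrix_apply, sub_eq_zero]
  rfl

private def πmap : (EE × EE) →ₗ[ℝ]
    (Matrix (Fin n) (Fin m) ℍ[ℝ] × Matrix (Fin n) (Fin n) ℍ[ℝ]) :=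
  { toFun := fun p => (p.1.toBlocks₂₁, p.1.toBlocks₂₂)
    map_add' := fun p q => rfl
    map_smul' := fun r p => rfl }

private lemma rank_split (T : Submodule ℝ (EE × EE)) :
    Module.finrank ℝ (T.map (πmap (m := m) (n := n))) +
      Module.finrank ℝ (T ⊓ LinearMap.ker (πmap (m := m) (n := n)) : Submodule ℝ (EE × EE)) =
      Module.finrank ℝ T := by
  have h := LinearMap.finrank_range_add_finrank_ker ((πmap (m := m) (n := n)).comp T.subtype)
  rw [LinearMap.range_comp, Submodule.range_subtype] at h
  rw [LinearMap.ker_comp] at h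
  have e := Submodule.equivMapOfInjective T.subtype (Submodule.injective_subtype T)
    (Submodule.comap T.subtype (LinearMap.ker (πmap (m := m) (n := n))))
  have e2 : Module.finrank ℝ
      (Submodule.comap T.subtype (LinearMap.ker (πmap (m := m) (n := n)))) =
      Module.finrank ℝ (T ⊓ LinearMap.ker (πmap (m := m) (n := n)) : Submodule ℝ (EE × EE)) := by
    rw [e.finrank_eq, Submodule.map_comap_subtype, inf_comm]
  rw [e2] at h
  exact h

set_option maxHeartbeats 4000000 in
include hinv in
private lemma converse (S0 R0 : EE) (hS0 : IsUnit S0) (hR0 : IsUnit R0)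
    (h1 : fromBlocks A C 0 1 * R0 = S0.map σ * fromBlocks A 0 0 1)
    (h2 : fromBlocks 1 0 0 B * R0 = S0 * fromBlocks 1 0 0 B) :
    ∃ X : Matrix (Fin m) (Fin n) ℍ[ℝ], X - A * X.map σ * B = C := by
  classical
  obtain ⟨u, hu⟩ := hS0
  obtain ⟨v, hv⟩ := hR0
  set S0i : EE := (u⁻¹).val with hS0idef
  set R0i : EE := (v⁻¹).val with hR0idef
  have huu : S0 * S0i = 1 := by rw [← hu]; exact u.mul_inv
  have huu' : S0i * S0 = 1 := by rw [← hu]; exact u.inv_mul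
  have hvv : R0 * R0i = 1 := by rw [← hv]; exact v.mul_inv
  have hvv' : R0i * R0 = 1 := by rw [← hv]; exact v.inv_mul
  have hσu : S0.map σ * S0i.map σ = 1 := by rw [← mmap_mul, huu, mmap_one]
  have hσu' : S0i.map σ * S0.map σ = 1 := by rw [← mmap_mul, huu', mmap_one]
  -- auxiliary inverted relations
  have haux1 : fromBlocks A 0 0 1 * R0i = S0i.map σ * fromBlocks A C 0 1 := by
    have hN : S0i.map σ * (fromBlocks A C 0 1 * R0) = fromBlocks A 0 0 1 := by
      rw [h1, ← Matrix.mul_assoc, hσu', Matrix.one_mul]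
    calc fromBlocks A 0 0 1 * R0i
        = S0i.map σ * (fromBlocks A C 0 1 * R0) * R0i := by rw [hN]
      _ = S0i.map σ * fromBlocks A C 0 1 * (R0 * R0i) := by
          simp only [Matrix.mul_assoc]
      _ = S0i.map σ * fromBlocks A C 0 1 := by rw [hvv, Matrix.mul_one]
  have haux2 : fromBlocks 1 0 0 B * R0i = S0i * fromBlocks 1 0 0 B := by
    have hP : S0i * (fromBlocks 1 0 0 B * R0) = fromBlocks 1 0 0 B := by
      rw [h2, ← Matrix.mul_assoc, huu', Matrix.one_mul]
    calc fromBlocks 1 0 0 B * R0i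
        = S0i * (fromBlocks 1 0 0 B * R0) * R0i := by rw [hP]
      _ = S0i * fromBlocks 1 0 0 B * (R0 * R0i) := by
          simp only [Matrix.mul_assoc]
      _ = S0i * fromBlocks 1 0 0 B := by rw [hvv, Matrix.mul_one]
  -- the linear equivalence
  let Φ : (EE × EE) ≃ₗ[ℝ] (EE × EE) :=
    LinearEquiv.ofLinear
      ((LinearMap.mulLeft ℝ S0).prodMap (LinearMap.mulLeft ℝ R0))
      ((LinearMap.mulLeft ℝ S0i).prodMap (LinearMap.mulLeft ℝ R0i))
      (by
        apply LinearMap.ext; rintro ⟨a, b⟩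
        simp only [LinearMap.comp_apply, LinearMap.prodMap_apply, LinearMap.mulLeft_apply,
          LinearMap.id_apply, Prod.map_apply, ← Matrix.mul_assoc, huu, hvv, Matrix.one_mul])
      (by
        apply LinearMap.ext; rintro ⟨a, b⟩
        simp only [LinearMap.comp_apply, LinearMap.prodMap_apply, LinearMap.mulLeft_apply,
          LinearMap.id_apply, Prod.map_apply, ← Matrix.mul_assoc, huu', hvv', Matrix.one_mul])
  have hΦsymm : ∀ p : EE × EE, Φ.symm p = (S0i * p.1, R0i * p.2) := fun p => rfl
  have hmapΦ : (LinearMap.ker (Fmap σ hinv A B 0)).map (Φ : (EE × EE) →ₗ[ℝ] (EE × EE)) =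
      LinearMap.ker (Fmap σ hinv A B C) := by
    ext p
    rw [Submodule.mem_map_equiv, hΦsymm, mem_T_iff, mem_T_iff]
    simp only
    constructor
    · rintro ⟨g1, g2⟩
      constructor
      · have hb : p.2 = R0 * (R0i * p.2) := by
          rw [← Matrix.mul_assoc, hvv, Matrix.one_mul]
        calc fromBlocks A C 0 1 * p.2
            = fromBlocks A C 0 1 * R0 * (R0i * p.2) := by
              rw [Matrix.mul_assoc, ← hb]
          _ = S0.map σ * (fromBlocks A 0 0 1 * (R0i * p.2)) := by
              rw [h1, Matrix.mul_assoc]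
          _ = S0.map σ * ((S0i * p.1).map σ * fromBlocks A 0 0 1) := by rw [g1]
          _ = S0.map σ * (S0i.map σ * p.1.map σ) * fromBlocks A 0 0 1 := by
              rw [mmap_mul σ]; simp only [Matrix.mul_assoc]
          _ = p.1.map σ * fromBlocks A 0 0 1 := by
              rw [← Matrix.mul_assoc (S0.map σ), hσu, Matrix.one_mul]
      · have hb : p.2 = R0 * (R0i * p.2) := by
          rw [← Matrix.mul_assoc, hvv, Matrix.one_mul]
        calc fromBlocks 1 0 0 B * p.2
            = fromBlocks 1 0 0 B * R0 * (R0i * p.2) := by rw [Matrix.mul_assoc, ← hb]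
          _ = S0 * (fromBlocks 1 0 0 B * (R0i * p.2)) := by rw [h2, Matrix.mul_assoc]
          _ = S0 * (S0i * p.1 * fromBlocks 1 0 0 B) := by rw [g2]
          _ = S0 * S0i * p.1 * fromBlocks 1 0 0 B := by
              simp only [Matrix.mul_assoc]
          _ = p.1 * fromBlocks 1 0 0 B := by rw [huu, Matrix.one_mul]
    · rintro ⟨g1, g2⟩
      constructor
      · calc fromBlocks A 0 0 1 * (R0i * p.2)
            = fromBlocks A 0 0 1 * R0i * p.2 := by rw [Matrix.mul_assoc]
          _ = S0i.map σ * fromBlocks A C 0 1 * p.2 := by rw [haux1]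
          _ = S0i.map σ * (p.1.map σ * fromBlocks A 0 0 1) := by
              rw [Matrix.mul_assoc, g1]
          _ = (S0i * p.1).map σ * fromBlocks A 0 0 1 := by
              rw [mmap_mul σ]; simp only [Matrix.mul_assoc]
      · calc fromBlocks 1 0 0 B * (R0i * p.2)
            = fromBlocks 1 0 0 B * R0i * p.2 := by rw [Matrix.mul_assoc]
          _ = S0i * fromBlocks 1 0 0 B * p.2 := by rw [haux2]
          _ = S0i * (p.1 * fromBlocks 1 0 0 B) := by rw [Matrix.mul_assoc, g2]
          _ = S0i * p.1 * fromBlocks 1 0 0 B := by simp only [Matrix.mul_assoc]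
  -- equal finrank of the two kernels
  have hfin : Module.finrank ℝ (LinearMap.ker (Fmap σ hinv A B C)) =
      Module.finrank ℝ (LinearMap.ker (Fmap σ hinv A B 0)) := by
    rw [← hmapΦ, LinearEquiv.finrank_map_eq]
  -- equal intersections with ker π
  have hker : LinearMap.ker (Fmap σ hinv A B C) ⊓ LinearMap.ker (πmap (m := m) (n := n)) =
      LinearMap.ker (Fmap σ hinv A B 0) ⊓ LinearMap.ker (πmap (m := m) (n := n)) := by
    ext p
    have hπ : πmap (m := m) (n := n) p = (p.1.toBlocks₂₁, p.1.toBlocks₂₂) := rfl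
    rw [Submodule.mem_inf, Submodule.mem_inf, mem_T_iff σ hinv A B C,
      mem_T_iff σ hinv A B 0, LinearMap.mem_ker, hπ, Prod.mk_eq_zero,
      eq1_iff σ A C, eq1_iff σ A (0 : Matrix (Fin m) (Fin n) ℍ[ℝ]), eq2_iff B]
    constructor
    · rintro ⟨⟨⟨e1, e2, e3, e4⟩, f⟩, hb1, hb2⟩
      rw [hb1, mmap_zero, Matrix.zero_mul] at e3
      rw [hb2, mmap_zero] at e4
      rw [e3, Matrix.mul_zero, add_zero] at e1
      rw [e4, Matrix.mul_zero, add_zero] at e2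
      refine ⟨⟨⟨?_, ?_, ?_, ?_⟩, f⟩, hb1, hb2⟩
      · rw [Matrix.zero_mul, add_zero]; exact e1
      · rw [Matrix.zero_mul, add_zero]; exact e2
      · rw [hb1, mmap_zero, Matrix.zero_mul]; exact e3
      · rw [hb2, mmap_zero]; exact e4
    · rintro ⟨⟨⟨e1, e2, e3, e4⟩, f⟩, hb1, hb2⟩
      rw [hb1, mmap_zero, Matrix.zero_mul] at e3
      rw [hb2, mmap_zero] at e4
      rw [Matrix.zero_mul, add_zero] at e1
      rw [Matrix.zero_mul, add_zero] at e2
      refine ⟨⟨⟨?_, ?_, ?_, ?_⟩, f⟩, hb1, hb2⟩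
      · rw [e3, Matrix.mul_zero, add_zero]; exact e1
      · rw [e4, Matrix.mul_zero, add_zero]; exact e2
      · rw [hb1, mmap_zero, Matrix.zero_mul]; exact e3
      · rw [hb2, mmap_zero]; exact e4
  -- monotonicity of images under π
  have hmono : (LinearMap.ker (Fmap σ hinv A B C)).map (πmap (m := m) (n := n)) ≤
      (LinearMap.ker (Fmap σ hinv A B 0)).map (πmap (m := m) (n := n)) := by
    intro x hx
    obtain ⟨p, hp, rfl⟩ := Submodule.mem_map.mp hx
    rw [mem_T_iff σ hinv A B C, eq1_iff σ A C, eq2_iff B] at hp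
    obtain ⟨⟨e1, e2, e3, e4⟩, f1, f2, f3, f4⟩ := hp
    refine Submodule.mem_map.mpr ⟨(fromBlocks 0 0 p.1.toBlocks₂₁ p.1.toBlocks₂₂,
             fromBlocks 0 0 p.2.toBlocks₂₁ p.2.toBlocks₂₂), ?_, ?_⟩
    · rw [mem_T_iff σ hinv A B 0, eq1_iff σ A (0 : Matrix (Fin m) (Fin n) ℍ[ℝ]), eq2_iff B]
      simp only [toBlocks_fromBlocks₁₁, toBlocks_fromBlocks₁₂, toBlocks_fromBlocks₂₁,
        toBlocks_fromBlocks₂₂, mmap_zero, Matrix.zero_mul, Matrix.mul_zero,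
        add_zero, zero_add]
      exact ⟨⟨trivial, trivial, e3, e4⟩, trivial, trivial, f3, f4⟩
    · show (_, _) = (_, _)
      rw [toBlocks_fromBlocks₂₁, toBlocks_fromBlocks₂₂]
  -- equal images
  have hrC := rank_split (LinearMap.ker (Fmap σ hinv A B C))
  have hr0 := rank_split (LinearMap.ker (Fmap σ hinv A B 0))
  rw [hker] at hrC
  have himg : Module.finrank ℝ
      ((LinearMap.ker (Fmap σ hinv A B 0)).map (πmap (m := m) (n := n))) ≤
      Module.finrank ℝ
      ((LinearMap.ker (Fmap σ hinv A B C)).map (πmap (m := m) (n := n))) := by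
    omega
  have heq := Submodule.eq_of_le_of_finrank_le hmono himg
  -- (0, 1) is in the image for C = 0
  have h11 : ((0 : Matrix (Fin n) (Fin m) ℍ[ℝ]), (1 : Matrix (Fin n) (Fin n) ℍ[ℝ])) ∈
      (LinearMap.ker (Fmap σ hinv A B 0)).map (πmap (m := m) (n := n)) := by
    refine Submodule.mem_map.mpr ⟨(1, 1), ?_, ?_⟩
    · rw [mem_T_iff σ hinv A B 0]
      constructor
      · rw [Matrix.mul_one, mmap_one, Matrix.one_mul]
      · rw [Matrix.mul_one, Matrix.one_mul]
    · show ((1 : EE).toBlocks₂₁, (1 : EE).toBlocks₂₂) = _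
      conv_lhs => rw [← fromBlocks_one (l := Fin m) (m := Fin n) (α := ℍ[ℝ])]
      rw [toBlocks_fromBlocks₂₁, toBlocks_fromBlocks₂₂]
  rw [← heq] at h11
  obtain ⟨p, hp, hpeq⟩ := Submodule.mem_map.mp h11
  rw [mem_T_iff σ hinv A B C, eq1_iff σ A C, eq2_iff B] at hp
  obtain ⟨⟨e1, e2, e3, e4⟩, f1, f2, f3, f4⟩ := hp
  have hb1 : p.1.toBlocks₂₁ = 0 := congrArg Prod.fst hpeq
  have hb2 : p.1.toBlocks₂₂ = 1 := congrArg Prod.snd hpeq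
  refine ⟨(p.1.toBlocks₁₂).map σ, ?_⟩
  rw [mmap_invol σ hinv]
  rw [hb2, mmap_one] at e4
  rw [e4, Matrix.mul_one, f2] at e2
  rw [← e2, ← Matrix.mul_assoc]
  exact add_sub_cancel_left _ _

private lemma isUnit_upper (Y : Matrix (Fin m) (Fin n) ℍ[ℝ]) :
    IsUnit (fromBlocks 1 Y 0 1 : EE) := by
  refine ⟨⟨fromBlocks 1 Y 0 1, fromBlocks 1 (-Y) 0 1, ?_, ?_⟩, rfl⟩ <;>
  · rw [fromBlocks_multiply]
    simp only [Matrix.mul_one, Matrix.one_mul, Matrix.mul_zero, Matrix.zero_mul,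
      add_zero, zero_add, add_neg_cancel, neg_add_cancel]
    exact fromBlocks_one

end Wim

theorem wimmer_quaternion_twisted {m n : ℕ} (σ : ℍ[ℝ] ≃+* ℍ[ℝ])
    (hinv : ∀ h : ℍ[ℝ], σ (σ h) = h)
    (A : Matrix (Fin m) (Fin m) ℍ[ℝ]) (B : Matrix (Fin n) (Fin n) ℍ[ℝ])
    (C : Matrix (Fin m) (Fin n) ℍ[ℝ]) :
    (∃ X : Matrix (Fin m) (Fin n) ℍ[ℝ], X - A * X.map σ * B = C) ↔
    (∃ S R : Matrix (Fin m ⊕ Fin n) (Fin m ⊕ Fin n) ℍ[ℝ], IsUnit S ∧ IsUnit R ∧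
      fromBlocks A C 0 1 * R = S.map σ * fromBlocks A 0 0 1 ∧
      fromBlocks 1 0 0 B * R = S * fromBlocks 1 0 0 B) := by
  constructor
  · rintro ⟨X, hX⟩
    refine ⟨fromBlocks 1 (X.map σ) 0 1, fromBlocks 1 (X.map σ * B) 0 1,
      isUnit_upper _, isUnit_upper _, ?_, ?_⟩
    · rw [fromBlocks_multiply, fromBlocks_map, mmap_one σ, mmap_invol σ hinv, mmap_zero σ,
        fromBlocks_multiply]
      simp only [Matrix.mul_one, Matrix.one_mul, Matrix.mul_zero, Matrix.zero_mul,
        add_zero, zero_add]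
      rw [fromBlocks_inj]
      refine ⟨rfl, ?_, rfl, (mmap_one σ).symm⟩
      rw [← hX, ← Matrix.mul_assoc]
      abel
    · rw [fromBlocks_multiply, fromBlocks_multiply]
      simp only [Matrix.mul_one, Matrix.one_mul, Matrix.mul_zero, Matrix.zero_mul,
        add_zero, zero_add]
  · rintro ⟨S, R, hS, hR, h1, h2⟩
    exact converse σ hinv A B C S R hS hR h1 h2
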